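/- arXiv:1110.3856 — 4 statements merged into one kernel-verified Lean document; each statement's English description precedes it below -/
import Mathlib

section
/- Let a ∈ (0,1) and let (Y_j)_{j≥1} be independent random variables, with Y_j Poisson distributed with mean a^j/j, defined on the product probability measure on ℕ^{ℕ≥1}. Then Σ_{j≥1} j·Y_j is almost surely finite, and for every k ∈ ℕ, P(Σ_{j≥1} j·Y_j = k) = (1−a)·a^k; that is, Σ_j j·Y_j is geometric with parameter a. -/
open Finset

noncomputable def Wm (M : Multiset ℕ) : ℝ :=
  ∏ i ∈ M.toFinset, (((i : ℝ) ^ (M.count i)) * (Nat.factorial (M.count i)))⁻¹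

lemma Wm_nonneg (M : Multiset ℕ) : 0 ≤ Wm M :=
  Finset.prod_nonneg fun i _ => by positivity

lemma Wm_cons {j : ℕ} (hj : 0 < j) (M : Multiset ℕ) :
    ((j : ℝ) * ((M.count j : ℝ) + 1)) * Wm (j ::ₘ M) = Wm M := by
  classical
  set f : ℕ → ℝ := fun i => (((i : ℝ) ^ (M.count i)) * (Nat.factorial (M.count i)))⁻¹ with hf
  set g : ℕ → ℝ :=
    fun i => (((i : ℝ) ^ ((j ::ₘ M).count i)) * (Nat.factorial ((j ::ₘ M).count i)))⁻¹ with hg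
  have hTc : (j ::ₘ M).toFinset = insert j M.toFinset := Multiset.toFinset_cons j M
  have hmemj : j ∈ insert j M.toFinset := mem_insert_self _ _
  have h1 : Wm (j ::ₘ M) = g j * ∏ i ∈ (insert j M.toFinset).erase j, g i := by
    rw [Wm, hTc, ← Finset.mul_prod_erase _ g hmemj]
  have h2 : Wm M = f j * ∏ i ∈ (insert j M.toFinset).erase j, f i := by
    have hWM : Wm M = ∏ i ∈ insert j M.toFinset, f i := by
      rw [Wm, eq_comm]
      apply Finset.prod_insert_of_eq_one_if_notMem
      intro h
      have hc : M.count j = 0 := by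
        rw [Multiset.count_eq_zero]
        exact fun hm => h (Multiset.mem_toFinset.2 hm)
      simp [hf, hc]
    rw [hWM, ← Finset.mul_prod_erase _ f hmemj]
  have hrest : ∏ i ∈ (insert j M.toFinset).erase j, g i
      = ∏ i ∈ (insert j M.toFinset).erase j, f i := by
    apply Finset.prod_congr rfl
    intro i hi
    have hij : i ≠ j := Finset.ne_of_mem_erase hi
    simp [hf, hg, Multiset.count_cons_of_ne hij]
  rw [h1, h2, hrest, ← mul_assoc]
  congr 1
  have hj0 : (j : ℝ) ≠ 0 := Nat.cast_ne_zero.2 hj.ne'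
  simp only [hf, hg, Multiset.count_cons_self]
  set c := M.count j
  have hfact : (Nat.factorial (c + 1) : ℝ) = ((c : ℝ) + 1) * Nat.factorial c := by
    rw [Nat.factorial_succ]; push_cast; ring
  have hf0 : (Nat.factorial c : ℝ) ≠ 0 := Nat.cast_ne_zero.2 (Nat.factorial_ne_zero c)
  have hc1 : (c : ℝ) + 1 ≠ 0 := by positivity
  rw [hfact, pow_succ]
  field_simp

def erasePart {k : ℕ} (p : Nat.Partition k) (j : ℕ) (hj : j ∈ p.parts) :
    Nat.Partition (k - j) where
  parts := p.parts.erase j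
  parts_pos := fun hi => p.parts_pos (Multiset.mem_of_mem_erase hi)
  parts_sum := by
    have h1 : j + (p.parts.erase j).sum = p.parts.sum := by
      conv_rhs => rw [← Multiset.cons_erase hj]
      rw [Multiset.sum_cons]
    have h2 := p.parts_sum
    omega

def consPart {k j : ℕ} (hj1 : 0 < j) (hjk : j ≤ k) (q : Nat.Partition (k - j)) :
    Nat.Partition k where
  parts := j ::ₘ q.parts
  parts_pos := fun hi => by
    rcases Multiset.mem_cons.1 hi with rfl | hi
    · exact hj1
    · exact q.parts_pos hi
  parts_sum := by rw [Multiset.sum_cons, q.parts_sum]; omega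

lemma parts_sum_toFinset {k : ℕ} (p : Nat.Partition k) :
    ∑ j ∈ p.parts.toFinset, p.parts.count j * j = k := by
  have := Finset.sum_multiset_map_count p.parts (id : ℕ → ℕ)
  simp only [smul_eq_mul, id] at this
  rw [Multiset.map_id'] at this
  rw [← this, p.parts_sum]

lemma sum_W : ∀ k : ℕ, ∑ p : Nat.Partition k, Wm p.parts = 1 := by
  intro k
  induction k using Nat.strong_induction_on with
  | _ k ih =>
    rcases Nat.eq_zero_or_pos k with rfl | hk
    · rw [Finset.sum_eq_single_of_mem default (Finset.mem_univ _)]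
      · show Wm (default : Nat.Partition 0).parts = 1
        have h0 : (default : Nat.Partition 0).parts = 0 := rfl
        rw [h0]; simp [Wm]
      · intro b _ hb; exact absurd (Subsingleton.elim b default) hb
    · have hk0 : (k : ℝ) ≠ 0 := Nat.cast_ne_zero.2 hk.ne'
      apply mul_left_cancel₀ hk0
      rw [mul_one, Finset.mul_sum]
      have step1 : ∀ p : Nat.Partition k,
          (k : ℝ) * Wm p.parts
            = ∑ j ∈ p.parts.toFinset, ((j : ℝ) * (p.parts.count j : ℝ)) * Wm p.parts := by
        intro p
        rw [← Finset.sum_mul]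
        congr 1
        calc (k : ℝ) = ((∑ j ∈ p.parts.toFinset, p.parts.count j * j : ℕ) : ℝ) := by
              rw [parts_sum_toFinset]
          _ = ∑ j ∈ p.parts.toFinset, ((j : ℝ) * (p.parts.count j : ℝ)) := by
              push_cast
              exact Finset.sum_congr rfl fun x _ => by ring
      calc ∑ p : Nat.Partition k, (k : ℝ) * Wm p.parts
          = ∑ p : Nat.Partition k, ∑ j ∈ p.parts.toFinset,
              ((j : ℝ) * (p.parts.count j : ℝ)) * Wm p.parts :=
            Finset.sum_congr rfl fun p _ => step1 p
        _ = ∑ x ∈ (Finset.univ : Finset (Nat.Partition k)).sigma (fun p => p.parts.toFinset),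
              ((x.2 : ℝ) * (x.1.parts.count x.2 : ℝ)) * Wm x.1.parts := by
            rw [Finset.sum_sigma]
        _ = ∑ x ∈ (Finset.Icc 1 k).sigma
              (fun j => (Finset.univ : Finset (Nat.Partition (k - j)))), Wm x.2.parts := by
            refine Finset.sum_bij'
              (i := fun (x : Σ _ : Nat.Partition k, ℕ) hx =>
                (⟨x.2, erasePart x.1 x.2
                    (Multiset.mem_toFinset.1 (Finset.mem_sigma.1 hx).2)⟩ :
                  Σ j : ℕ, Nat.Partition (k - j)))
              (j := fun (y : Σ j : ℕ, Nat.Partition (k - j)) hy =>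
                (⟨consPart
                    ((Finset.mem_Icc.1 (Finset.mem_sigma.1 hy).1).1)
                    ((Finset.mem_Icc.1 (Finset.mem_sigma.1 hy).1).2) y.2, y.1⟩ :
                  Σ _ : Nat.Partition k, ℕ))
              ?_ ?_ ?_ ?_ ?_
            · intro x hx
              have hmem : x.2 ∈ x.1.parts :=
                Multiset.mem_toFinset.1 (Finset.mem_sigma.1 hx).2
              rw [Finset.mem_sigma]
              refine ⟨Finset.mem_Icc.2 ⟨x.1.parts_pos hmem, ?_⟩, Finset.mem_univ _⟩
              have h := Multiset.single_le_sum (fun i _ => Nat.zero_le i) _ hmem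
              rw [x.1.parts_sum] at h
              exact h
            · intro y hy
              rw [Finset.mem_sigma]
              exact ⟨Finset.mem_univ _,
                Multiset.mem_toFinset.2 (Multiset.mem_cons_self _ _)⟩
            · intro x hx
              obtain ⟨p, jj⟩ := x
              have hmem : jj ∈ p.parts :=
                Multiset.mem_toFinset.1 (Finset.mem_sigma.1 hx).2
              simp only
              refine congrArg (fun P => (⟨P, jj⟩ : Σ _ : Nat.Partition k, ℕ)) ?_
              apply Nat.Partition.ext
              exact Multiset.cons_erase hmem
            · intro y hy
              obtain ⟨jj, q⟩ := y
              simp only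
              refine congrArg (Sigma.mk jj) ?_
              apply Nat.Partition.ext
              exact Multiset.erase_cons_head jj q.parts
            · intro x hx
              obtain ⟨p, jj⟩ := x
              have hmem : jj ∈ p.parts :=
                Multiset.mem_toFinset.1 (Finset.mem_sigma.1 hx).2
              have hpos : 0 < jj := p.parts_pos hmem
              have hparts : jj ::ₘ p.parts.erase jj = p.parts :=
                Multiset.cons_erase hmem
              have hw := Wm_cons hpos (p.parts.erase jj)
              rw [hparts] at hw
              have hcount : p.parts.count jj = (p.parts.erase jj).count jj + 1 := by
                conv_lhs => rw [← hparts]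
                rw [Multiset.count_cons_self]
              simp only
              show ((jj : ℝ) * (p.parts.count jj : ℝ)) * Wm p.parts
                = Wm ((erasePart p jj hmem).parts)
              have : (erasePart p jj hmem).parts = p.parts.erase jj := rfl
              rw [this, ← hw, hcount]
              push_cast
              ring
        _ = ∑ j ∈ Finset.Icc 1 k, ∑ q : Nat.Partition (k - j), Wm q.parts := by
            rw [Finset.sum_sigma]
        _ = ∑ j ∈ Finset.Icc 1 k, 1 :=
            Finset.sum_congr rfl fun j hj =>
              ih (k - j) (by have := Finset.mem_Icc.1 hj; omega)
        _ = (k : ℝ) := by simp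


open MeasureTheory ProbabilityTheory Filter
open scoped Topology ENNReal

local notation "Jt" => {j : ℕ // 0 < j}

lemma hasSum_lam {a : ℝ} (ha : a ∈ Set.Ioo (0:ℝ) 1) :
    HasSum (fun j : Jt => a ^ (j : ℕ) / ((j : ℕ) : ℝ)) (-Real.log (1 - a)) := by
  have h := Real.hasSum_pow_div_log_of_abs_lt_one (x := a)
    (by rw [abs_of_pos ha.1]; exact ha.2)
  let e : ℕ ≃ Jt :=
    { toFun := fun n => ⟨n + 1, n.succ_pos⟩
      invFun := fun j => (j : ℕ) - 1
      left_inv := fun n => by simp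
      right_inv := fun j => Subtype.ext (Nat.succ_pred_eq_of_pos j.2) }
  rw [← e.hasSum_iff]
  convert h using 1
  funext n
  show a ^ (n + 1) / ((n + 1 : ℕ) : ℝ) = a ^ (n + 1) / ((n : ℝ) + 1)
  push_cast
  ring_nf

lemma meas_singleton {a : ℝ} (ha : a ∈ Set.Ioo (0:ℝ) 1)
    (μ : Measure (Jt → ℕ)) [IsProbabilityMeasure μ]
    (hindep : iIndepFun (fun j ω => ω j) μ)
    (hmarg : ∀ (j : Jt) (k : ℕ),
      μ {ω | ω j = k} = ENNReal.ofReal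
        (Real.exp (-(a ^ (j : ℕ) / (j : ℕ))) * (a ^ (j : ℕ) / (j : ℕ)) ^ k / k.factorial))
    (K : ℕ) (x : Jt → ℕ) (hx : ∀ j : Jt, K < (j : ℕ) → x j = 0) :
    μ {x} = ENNReal.ofReal ((1 - a) *
      ∏ j ∈ (Finset.range (K+1)).subtype (fun n => 0 < n),
        ((a ^ (j : ℕ) / ((j : ℕ) : ℝ)) ^ (x j) / (x j).factorial)) := by
  classical
  set lam : Jt → ℝ := fun j => a ^ (j : ℕ) / ((j : ℕ) : ℝ) with hlam
  have hlam_nonneg : ∀ j : Jt, 0 ≤ lam j := fun j => by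
    have := ha.1
    positivity
  set G : ℕ → Finset Jt := fun m => (Finset.range m).subtype (fun n => 0 < n) with hG
  set A : ℕ → Set (Jt → ℕ) := fun m => ⋂ j ∈ G m, (fun ω : Jt → ℕ => ω j) ⁻¹' {x j} with hA
  set C : ℝ := ∏ j ∈ G (K+1), (lam j ^ (x j) / (x j).factorial) with hC
  have hC0 : 0 ≤ C := Finset.prod_nonneg fun j _ => by have := hlam_nonneg j; positivity
  -- measure of the cylinders
  have hAμ : ∀ m, μ (A m) = ∏ j ∈ G m,
      ENNReal.ofReal (Real.exp (-lam j) * lam j ^ (x j) / (x j).factorial) := by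
    intro m
    have h := hindep.measure_inter_preimage_eq_mul (G m)
      (sets := fun j => {x j}) (fun i _ => measurableSet_singleton _)
    rw [hA]
    simp only
    rw [h]
    refine Finset.prod_congr rfl fun j _ => ?_
    have hset : (fun ω : Jt → ℕ => ω j) ⁻¹' {x j} = {ω | ω j = x j} := by
      ext ω; simp
    rw [hset, hmarg j (x j)]
  have hGmono : Monotone G := by
    intro m n hmn j hj
    simp only [hG, Finset.mem_subtype, Finset.mem_range] at *
    omega
  -- value of the cylinder measure eventually
  have hprod : ∀ m, K + 1 ≤ m →
      μ (A m) = ENNReal.ofReal (Real.exp (-(∑ j ∈ G m, lam j)) * C) := by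
    intro m hm
    rw [hAμ m, ← ENNReal.ofReal_prod_of_nonneg
      (fun j _ => by have := hlam_nonneg j; positivity)]
    congr 1
    have hsplit : ∏ j ∈ G m, (Real.exp (-lam j) * lam j ^ (x j) / (x j).factorial)
        = (∏ j ∈ G m, Real.exp (-lam j)) * ∏ j ∈ G m, (lam j ^ (x j) / (x j).factorial) := by
      rw [← Finset.prod_mul_distrib]
      exact Finset.prod_congr rfl fun j _ => by ring
    rw [hsplit]
    congr 1
    · rw [← Real.exp_sum, ← Finset.sum_neg_distrib]
    · rw [hC]
      apply (Finset.prod_subset (hGmono hm) ?_).symm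
      intro j hjm hjK
      have hj : K < (j : ℕ) := by
        simp only [hG, Finset.mem_subtype, Finset.mem_range] at hjm hjK
        omega
      rw [hx j hj]
      simp
  -- limits
  have hStend : Tendsto (fun m => ∑ j ∈ G m, lam j) atTop (𝓝 (-Real.log (1 - a))) := by
    have hsum := hasSum_lam ha
    have hGtend : Tendsto G atTop atTop :=
      tendsto_atTop_finset_of_monotone hGmono (fun j =>
        ⟨(j : ℕ) + 1, by simp [hG, Finset.mem_subtype, Finset.mem_range, j.2]⟩)
    exact hsum.comp hGtend
  have htend2 : Tendsto (fun m => μ (A m)) atTop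
      (𝓝 (ENNReal.ofReal (Real.exp (Real.log (1 - a)) * C))) := by
    have hre : Tendsto (fun m => Real.exp (-(∑ j ∈ G m, lam j)) * C) atTop
        (𝓝 (Real.exp (Real.log (1 - a)) * C)) := by
      have h1 : Tendsto (fun m => -(∑ j ∈ G m, lam j)) atTop (𝓝 (Real.log (1 - a))) := by
        have := hStend.neg
        rwa [neg_neg] at this
      exact ((Real.continuous_exp.tendsto _).comp h1).mul_const C
    have := (ENNReal.continuous_ofReal.tendsto _).comp hre
    apply this.congr'
    filter_upwards [eventually_ge_atTop (K+1)] with m hm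
    exact (hprod m hm).symm
  have hmeasA : ∀ m, MeasurableSet (A m) := by
    intro m
    apply Finset.measurableSet_biInter
    intro j _
    exact (measurable_pi_apply j) (measurableSet_singleton _)
  have hAnti : Antitone A := by
    intro m n hmn ω hω
    simp only [hA, Set.mem_iInter] at *
    intro j hj
    exact hω j (hGmono hmn hj)
  have htend1 : Tendsto (fun m => μ (A m)) atTop (𝓝 (μ (⋂ m, A m))) :=
    tendsto_measure_iInter_atTop (fun m => (hmeasA m).nullMeasurableSet) hAnti
      ⟨0, measure_ne_top μ _⟩
  have hInter : (⋂ m, A m) = {x} := by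
    ext ω
    simp only [hA, Set.mem_iInter, Set.mem_preimage, Set.mem_singleton_iff]
    constructor
    · intro h
      funext j
      exact h ((j : ℕ) + 1) j (by simp [hG, Finset.mem_subtype, Finset.mem_range, j.2])
    · intro h m j _
      rw [h]
  rw [hInter] at htend1
  have := tendsto_nhds_unique htend1 htend2
  rw [this, Real.exp_log (by linarith [ha.2] : (0:ℝ) < 1 - a)]

def partFun {k : ℕ} (p : Nat.Partition k) : Jt → ℕ := fun j => p.parts.count (j : ℕ)

lemma partFun_support_subset {k : ℕ} (p : Nat.Partition k) :
    Function.support (partFun p) ⊆ Subtype.val ⁻¹' ↑p.parts.toFinset := by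
  intro j hj
  simp only [Function.mem_support, partFun, ne_eq, Multiset.count_eq_zero, not_not] at hj
  simp only [Set.mem_preimage, Finset.coe_sort_coe, Finset.mem_coe, Multiset.mem_toFinset]
  exact hj

lemma partFun_support_finite {k : ℕ} (p : Nat.Partition k) :
    (Function.support (partFun p)).Finite :=
  Set.Finite.subset (Set.Finite.preimage (Set.injOn_of_injective Subtype.val_injective)
    p.parts.toFinset.finite_toSet) (partFun_support_subset p)

lemma partFun_zero_of_gt {k : ℕ} (p : Nat.Partition k) (j : Jt) (hj : k < (j : ℕ)) :
    partFun p j = 0 := by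
  rw [partFun, Multiset.count_eq_zero]
  intro hmem
  have h := Multiset.single_le_sum (fun i _ => Nat.zero_le i) _ hmem
  rw [p.parts_sum] at h
  omega

lemma finsum_eq_finset {ω : Jt → ℕ} (s : Finset Jt) (h : ∀ j, ω j ≠ 0 → j ∈ s) :
    ∑ᶠ j : Jt, (j : ℕ) * ω j = ∑ j ∈ s, (j : ℕ) * ω j := by
  apply finsum_eq_finset_sum_of_support_subset
  intro j hj
  simp only [Function.mem_support] at hj
  have hω : ω j ≠ 0 := by
    intro h0
    exact hj (by rw [h0, mul_zero])
  exact h j hω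

lemma partFun_finsum {k : ℕ} (p : Nat.Partition k) :
    ∑ᶠ j : Jt, (j : ℕ) * partFun p j = k := by
  rw [finsum_eq_finset (p.parts.toFinset.subtype (fun n => 0 < n))
    (fun j hj => by
      simp only [Finset.mem_subtype, Multiset.mem_toFinset]
      simp only [partFun, ne_eq, Multiset.count_eq_zero, not_not] at hj
      exact hj)]
  simp only [partFun]
  rw [Finset.sum_subtype_of_mem (fun i => i * p.parts.count i)
    (fun i hi => p.parts_pos (Multiset.mem_toFinset.1 hi))]
  have := parts_sum_toFinset p
  calc ∑ i ∈ p.parts.toFinset, i * p.parts.count i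
      = ∑ i ∈ p.parts.toFinset, p.parts.count i * i :=
        Finset.sum_congr rfl fun i _ => mul_comm _ _
    _ = k := parts_sum_toFinset p

lemma partFun_injective {k : ℕ} : Function.Injective (partFun (k := k)) := by
  intro p q h
  apply Nat.Partition.ext
  ext n
  rcases Nat.eq_zero_or_pos n with rfl | hn
  · rw [Multiset.count_eq_zero.2 (fun hm => absurd (p.parts_pos hm) (lt_irrefl 0)),
      Multiset.count_eq_zero.2 (fun hm => absurd (q.parts_pos hm) (lt_irrefl 0))]
  · exact congrFun h ⟨n, hn⟩

lemma multiset_sum_finset_sum {α : Type*} (s : Finset α) (f : α → Multiset ℕ) :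
    (∑ i ∈ s, f i).sum = ∑ i ∈ s, (f i).sum := by
  classical
  induction s using Finset.cons_induction with
  | empty => simp
  | cons a t ha ih => rw [Finset.sum_cons, Finset.sum_cons, Multiset.sum_add, ih]

lemma event_eq (k : ℕ) :
    {ω : Jt → ℕ | (Function.support ω).Finite ∧ ∑ᶠ j : Jt, (j : ℕ) * ω j = k}
      = ⋃ p ∈ (Finset.univ : Finset (Nat.Partition k)), {partFun p} := by
  classical
  ext ω
  simp only [Set.mem_setOf_eq, Set.mem_iUnion, Finset.mem_univ, Set.mem_singleton_iff,
    exists_prop, true_and]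
  constructor
  · rintro ⟨hfin, hsum⟩
    set T := hfin.toFinset with hT
    set M : Multiset ℕ := ∑ j ∈ T, Multiset.replicate (ω j) ((j : ℕ)) with hM
    have hpos : ∀ {i : ℕ}, i ∈ M → 0 < i := by
      intro i hi
      rw [hM, Multiset.mem_sum] at hi
      obtain ⟨j, _, hj⟩ := hi
      rw [Multiset.eq_of_mem_replicate hj]
      exact j.2
    have hsum' : M.sum = k := by
      rw [hM, multiset_sum_finset_sum]
      have : ∀ j ∈ T, (Multiset.replicate (ω j) ((j : ℕ))).sum = (j : ℕ) * ω j := by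
        intro j _
        rw [Multiset.sum_replicate, smul_eq_mul, mul_comm]
      rw [Finset.sum_congr rfl this]
      rw [← finsum_eq_finset T (fun j hj => by
        rw [hT, Set.Finite.mem_toFinset]; exact hj)]
      exact hsum
    refine ⟨⟨M, hpos, hsum'⟩, ?_⟩
    funext j
    show ω j = M.count (j : ℕ)
    rw [hM, Multiset.count_sum']
    rw [Finset.sum_eq_single j]
    · rw [Multiset.count_replicate_self]
    · intro b _ hbj
      rw [Multiset.count_replicate, if_neg (fun h => hbj (Subtype.ext h))]
    · intro hj
      rw [Multiset.count_replicate_self]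
      rw [hT, Set.Finite.mem_toFinset, Function.mem_support, not_not] at hj
      exact hj
  · rintro ⟨p, rfl⟩
    exact ⟨partFun_support_finite p, partFun_finsum p⟩

lemma prod_lam_eq {a : ℝ} {k : ℕ} (p : Nat.Partition k) :
    ∏ j ∈ (Finset.range (k+1)).subtype (fun n => 0 < n),
      ((a ^ (j : ℕ) / ((j : ℕ) : ℝ)) ^ (partFun p j) / (partFun p j).factorial)
    = a ^ k * Wm p.parts := by
  classical
  simp only [partFun]
  rw [Finset.prod_subtype_eq_prod_filter
    (fun i : ℕ => (a ^ i / (i : ℝ)) ^ (p.parts.count i) / (p.parts.count i).factorial)]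
  have hsub : p.parts.toFinset ⊆ (Finset.range (k+1)).filter (fun n => 0 < n) := by
    intro i hi
    have hmem := Multiset.mem_toFinset.1 hi
    have h1 := p.parts_pos hmem
    have h2 := Multiset.single_le_sum (fun i _ => Nat.zero_le i) _ hmem
    rw [p.parts_sum] at h2
    simp only [Finset.mem_filter, Finset.mem_range]
    omega
  rw [← Finset.prod_subset hsub (fun i _ hni => by
    have hc : p.parts.count i = 0 :=
      Multiset.count_eq_zero.2 (fun hm => hni (Multiset.mem_toFinset.2 hm))
    rw [hc]
    simp)]
  have hterm : ∀ i ∈ p.parts.toFinset,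
      (a ^ i / (i : ℝ)) ^ (p.parts.count i) / (p.parts.count i).factorial
        = a ^ (i * p.parts.count i) *
          (((i : ℝ) ^ (p.parts.count i)) * ((p.parts.count i).factorial : ℝ))⁻¹ := by
    intro i _
    rw [div_pow, ← pow_mul, div_div, div_eq_mul_inv]
  rw [Finset.prod_congr rfl hterm, Finset.prod_mul_distrib,
    Finset.prod_pow_eq_pow_sum]
  have hk : ∑ i ∈ p.parts.toFinset, i * p.parts.count i = k :=
    (Finset.sum_congr rfl fun i _ => mul_comm _ _).trans (parts_sum_toFinset p)
  rw [hk, Wm]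

lemma measurableSet_single (x : Jt → ℕ) : MeasurableSet {x} := by
  have h : {x} = ⋂ j : Jt, (fun ω : Jt → ℕ => ω j) ⁻¹' {x j} := by
    ext ω
    simp [funext_iff]
  rw [h]
  exact MeasurableSet.iInter fun j => (measurable_pi_apply j) (measurableSet_singleton _)

lemma meas_event {a : ℝ} (ha : a ∈ Set.Ioo (0:ℝ) 1)
    (μ : Measure (Jt → ℕ)) [IsProbabilityMeasure μ]
    (hindep : iIndepFun (fun j ω => ω j) μ)
    (hmarg : ∀ (j : Jt) (k : ℕ),
      μ {ω | ω j = k} = ENNReal.ofReal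
        (Real.exp (-(a ^ (j : ℕ) / (j : ℕ))) * (a ^ (j : ℕ) / (j : ℕ)) ^ k / k.factorial))
    (k : ℕ) :
    μ {ω | (Function.support ω).Finite ∧ ∑ᶠ j : Jt, (j : ℕ) * ω j = k}
      = ENNReal.ofReal ((1 - a) * a ^ k) := by
  classical
  rw [event_eq k]
  have hdisj : (↑(Finset.univ : Finset (Nat.Partition k)) : Set (Nat.Partition k)).PairwiseDisjoint
      (fun p => ({partFun p} : Set (Jt → ℕ))) := by
    intro p _ q _ hpq
    simp only [Set.disjoint_singleton]
    exact fun h => hpq (partFun_injective h)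
  rw [measure_biUnion_finset hdisj (fun p _ => measurableSet_single (partFun p))]
  have hval : ∀ p : Nat.Partition k,
      μ {partFun p} = ENNReal.ofReal ((1 - a) * (a ^ k * Wm p.parts)) := by
    intro p
    rw [meas_singleton ha μ hindep hmarg k (partFun p) (partFun_zero_of_gt p)]
    rw [prod_lam_eq p]
  rw [Finset.sum_congr rfl (fun p _ => hval p)]
  rw [← ENNReal.ofReal_sum_of_nonneg (fun p _ => by
    have h1 : (0:ℝ) ≤ 1 - a := by linarith [ha.2]
    have h2 := Wm_nonneg p.parts
    have h3 : (0:ℝ) ≤ a ^ k := le_of_lt (pow_pos ha.1 k)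
    positivity)]
  congr 1
  calc ∑ p : Nat.Partition k, (1 - a) * (a ^ k * Wm p.parts)
      = (1 - a) * a ^ k * ∑ p : Nat.Partition k, Wm p.parts := by
        rw [Finset.mul_sum]
        exact Finset.sum_congr rfl fun p _ => by ring
    _ = (1 - a) * a ^ k := by rw [sum_W k, mul_one]

lemma meas_support_finite {a : ℝ} (ha : a ∈ Set.Ioo (0:ℝ) 1)
    (μ : Measure (Jt → ℕ)) [IsProbabilityMeasure μ]
    (hmarg : ∀ (j : Jt) (k : ℕ),
      μ {ω | ω j = k} = ENNReal.ofReal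
        (Real.exp (-(a ^ (j : ℕ) / (j : ℕ))) * (a ^ (j : ℕ) / (j : ℕ)) ^ k / k.factorial)) :
    μ {ω | (Function.support ω).Finite} = 1 := by
  classical
  set lam : Jt → ℝ := fun j => a ^ (j : ℕ) / ((j : ℕ) : ℝ) with hlam
  have hmeas0 : ∀ j : Jt, MeasurableSet {ω : Jt → ℕ | ω j = 0} := by
    intro j
    have : {ω : Jt → ℕ | ω j = 0} = (fun ω : Jt → ℕ => ω j) ⁻¹' {0} := by
      ext ω; simp
    rw [this]
    exact (measurable_pi_apply j) (measurableSet_singleton _)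
  have hbound : ∀ j : Jt, μ {ω | ω j ≠ 0} ≤ ENNReal.ofReal (a ^ (j : ℕ)) := by
    intro j
    have h0 : μ {ω | ω j = 0} = ENNReal.ofReal (Real.exp (-lam j)) := by
      rw [hmarg j 0]
      congr 1
      simp
      rfl
    have hcompl : {ω : Jt → ℕ | ω j ≠ 0} = {ω : Jt → ℕ | ω j = 0}ᶜ := by
      ext ω; simp
    rw [hcompl, measure_compl (hmeas0 j) (measure_ne_top μ _), measure_univ, h0]
    rw [tsub_le_iff_right, ← ENNReal.ofReal_add (le_of_lt (pow_pos ha.1 _)) (le_of_lt (Real.exp_pos _))]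
    rw [← ENNReal.ofReal_one]
    apply ENNReal.ofReal_le_ofReal
    have hexp : 1 - lam j ≤ Real.exp (-lam j) := by
      have := Real.add_one_le_exp (-lam j)
      linarith
    have hle : lam j ≤ a ^ (j : ℕ) := by
      rw [hlam]
      apply div_le_self (le_of_lt (pow_pos ha.1 _))
      exact_mod_cast j.2
    linarith
  have hg : Summable (fun n : ℕ => a ^ n) :=
    summable_geometric_of_lt_one (le_of_lt ha.1) ha.2
  have hsummable : Summable (fun j : Jt => a ^ (j : ℕ)) := hg.subtype {j : ℕ | 0 < j}
  have htsum : ∑' j : Jt, μ {ω | ω j ≠ 0} ≠ ∞ := by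
    have h1 : ∑' j : Jt, μ {ω | ω j ≠ 0} ≤ ∑' j : Jt, ENNReal.ofReal (a ^ (j : ℕ)) :=
      ENNReal.tsum_le_tsum hbound
    have h2 : ∑' j : Jt, ENNReal.ofReal (a ^ (j : ℕ))
        = ENNReal.ofReal (∑' j : Jt, a ^ (j : ℕ)) :=
      (ENNReal.ofReal_tsum_of_nonneg (fun j => le_of_lt (pow_pos ha.1 _)) hsummable).symm
    rw [h2] at h1
    exact ne_top_of_le_ne_top ENNReal.ofReal_ne_top h1
  have hae := MeasureTheory.ae_finite_setOf_mem
    (μ := μ) (s := fun j : Jt => {ω : Jt → ℕ | ω j ≠ 0}) htsum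
  rw [ae_iff] at hae
  have hnull : μ {ω : Jt → ℕ | ¬ (Function.support ω).Finite} = 0 := by
    convert hae using 2
    rfl
  apply le_antisymm prob_le_one
  have hcup : (Set.univ : Set (Jt → ℕ))
      ⊆ {ω | (Function.support ω).Finite} ∪ {ω | ¬ (Function.support ω).Finite} := by
    intro ω _
    by_cases h : (Function.support ω).Finite
    · exact Or.inl h
    · exact Or.inr h
  calc (1 : ENNReal) = μ Set.univ := (measure_univ).symm
    _ ≤ μ ({ω | (Function.support ω).Finite} ∪ {ω | ¬ (Function.support ω).Finite}) :=
        measure_mono hcup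
    _ ≤ μ {ω | (Function.support ω).Finite} + μ {ω | ¬ (Function.support ω).Finite} :=
        measure_union_le _ _
    _ = μ {ω | (Function.support ω).Finite} := by rw [hnull, add_zero]

/-- **Compound Poisson representation of the geometric distribution.**
Let `(Y_j)_{j≥1}` be independent, with `Y_j` Poisson of mean `a^j/j`,
`a ∈ (0,1)`, realized as the coordinates of a product probability measure on
`ℕ^{ℕ≥1}`.  Then `Σ_{j≥1} j·Y_j` is almost surely finite (almost surely only
finitely many `Y_j` are nonzero) and for every `k`,
`P(Σ_j j·Y_j = k) = (1−a)·a^k`, i.e. the sum is geometric with parameter `a`. -/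
theorem compound_poisson_geometric (a : ℝ) (ha : a ∈ Set.Ioo (0 : ℝ) 1)
    (μ : Measure ({j : ℕ // 0 < j} → ℕ)) [IsProbabilityMeasure μ]
    (hindep : iIndepFun (fun j ω => ω j) μ)
    (hmarg : ∀ (j : {j : ℕ // 0 < j}) (k : ℕ),
      μ {ω | ω j = k} = ENNReal.ofReal
        (Real.exp (-(a ^ (j : ℕ) / (j : ℕ))) * (a ^ (j : ℕ) / (j : ℕ)) ^ k / k.factorial)) :
    μ {ω | (Function.support ω).Finite} = 1 ∧
    ∀ k : ℕ,
      μ {ω | (Function.support ω).Finite ∧ ∑ᶠ j : {j : ℕ // 0 < j}, j.1 * ω j = k} =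
        ENNReal.ofReal ((1 - a) * a ^ k) := by
  exact ⟨meas_support_finite ha μ hmarg, fun k => meas_event ha μ hindep hmarg k⟩
end

section
/- For every x ∈ (0,1), Σ_{j=1}^∞ x^j/(j·(1−x^j)) ≤ (π²/6) · x/(1−x). Moreover, with c = π/√6 and x = x(n) = exp(−c/√n), the right-hand side (π²/6)·x(n)/(1−x(n)) is asymptotic to c·√n as n → ∞; hence s(n) := Σ_{i,j≥1} x(n)^{ij}/j = Σ_{j≥1} x(n)^j/(j(1−x(n)^j)) is O(√n). -/
open Filter Asymptotics Real

/-- The Fristedt tilt `x(n) = exp(-c/√n)` with `c = π/√6`. -/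
noncomputable def fristedtX (n : ℕ) : ℝ := Real.exp (-(Real.pi / Real.sqrt 6) / Real.sqrt n)


lemma basel' : HasSum (fun j : ℕ => (1 : ℝ) / ((j : ℝ) + 1) ^ 2) (π ^ 2 / 6) := by
  have h := (hasSum_nat_add_iff (f := fun n : ℕ => (1 : ℝ) / (n : ℝ) ^ 2) 1).mpr
    (by simpa using hasSum_zeta_two)
  simpa [Nat.cast_add] using h

lemma term_le {x : ℝ} (hx : x ∈ Set.Ioo (0:ℝ) 1) (j : ℕ) :
    x ^ (j + 1) / (((j : ℝ) + 1) * (1 - x ^ (j + 1)))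
      ≤ (1 / ((j : ℝ) + 1) ^ 2) * (x / (1 - x)) := by
  obtain ⟨hx0, hx1⟩ := hx
  have hk : (0:ℝ) < (j : ℝ) + 1 := by positivity
  have hxk : x ^ (j + 1) < 1 := pow_lt_one₀ hx0.le hx1 (Nat.succ_ne_zero j)
  have h1x : (0:ℝ) < 1 - x := by linarith
  have h1xk : (0:ℝ) < 1 - x ^ (j + 1) := by linarith
  have hgs : (1:ℝ) - x ^ (j+1) = (1 - x) * ∑ i ∈ Finset.range (j+1), x ^ i := by
    linear_combination geom_sum_mul x (j+1)
  have hsum : ((j:ℝ) + 1) * x ^ j ≤ ∑ i ∈ Finset.range (j+1), x ^ i := by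
    have := Finset.card_nsmul_le_sum (Finset.range (j+1)) (fun i => x ^ i) (x ^ j)
      (fun i hi => pow_le_pow_of_le_one hx0.le hx1.le
        (by simpa using Nat.lt_succ_iff.mp (Finset.mem_range.mp hi)))
    simpa [nsmul_eq_mul] using this
  rw [div_mul_div_comm, one_mul, div_le_div_iff₀ (by positivity) (by positivity)]
  have hxx : x ^ (j + 1) = x * x ^ j := by ring
  have key := mul_le_mul_of_nonneg_left hsum
    (show (0:ℝ) ≤ x * (1 - x) * ((j:ℝ)+1) by positivity)
  rw [hgs, hxx]
  nlinarith [key]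

lemma part1 {x : ℝ} (hx : x ∈ Set.Ioo (0:ℝ) 1) :
    ∑' j : ℕ, x ^ (j + 1) / (((j : ℝ) + 1) * (1 - x ^ (j + 1)))
      ≤ (π ^ 2 / 6) * (x / (1 - x)) := by
  have hb : Summable (fun j : ℕ => (1 / ((j : ℝ) + 1) ^ 2) * (x / (1 - x))) :=
    basel'.summable.mul_right _
  have hnn : ∀ j : ℕ, 0 ≤ x ^ (j + 1) / (((j : ℝ) + 1) * (1 - x ^ (j + 1))) := by
    intro j
    have : x ^ (j+1) < 1 := pow_lt_one₀ hx.1.le hx.2 (Nat.succ_ne_zero j)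
    have h1 : (0:ℝ) < 1 - x ^ (j+1) := by linarith
    have h2 : (0:ℝ) < (j:ℝ) + 1 := by positivity
    have h3 : (0:ℝ) ≤ x ^ (j+1) := pow_nonneg hx.1.le _
    positivity
  have hs : Summable (fun j : ℕ => x ^ (j + 1) / (((j : ℝ) + 1) * (1 - x ^ (j + 1)))) :=
    Summable.of_nonneg_of_le hnn (fun j => term_le hx j) hb
  calc ∑' j : ℕ, x ^ (j + 1) / (((j : ℝ) + 1) * (1 - x ^ (j + 1)))
      ≤ ∑' j : ℕ, (1 / ((j : ℝ) + 1) ^ 2) * (x / (1 - x)) :=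
        Summable.tsum_le_tsum (fun j => term_le hx j) hs hb
    _ = (π ^ 2 / 6) * (x / (1 - x)) := by
        rw [tsum_mul_right, basel'.tsum_eq]

lemma sqrt_nat_atTop : Tendsto (fun n : ℕ => Real.sqrt n) atTop atTop := by
  rw [tendsto_atTop_atTop]
  intro b
  refine ⟨Nat.ceil (b ^ 2), fun n hn => ?_⟩
  have h1 : b ^ 2 ≤ (n : ℝ) := le_trans (Nat.le_ceil _) (by exact_mod_cast hn)
  calc b ≤ |b| := le_abs_self b
    _ = Real.sqrt (b ^ 2) := (Real.sqrt_sq_eq_abs b).symm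
    _ ≤ Real.sqrt n := Real.sqrt_le_sqrt h1

lemma slope_exp : Tendsto (fun t : ℝ => t / (Real.exp t - 1)) (nhdsWithin 0 (Set.Ioi 0)) (nhds 1) := by
  have h : Tendsto (fun t : ℝ => (Real.exp t - 1) / t) (nhdsWithin 0 {0}ᶜ) (nhds 1) := by
    have h0 := hasDerivAt_iff_tendsto_slope.mp (Real.hasDerivAt_exp 0)
    have heq : slope Real.exp 0 = fun t : ℝ => (Real.exp t - 1) / t := by
      funext t; simp [slope_def_field]
    rw [heq] at h0
    simpa using h0
  have h2 : Tendsto (fun t : ℝ => (Real.exp t - 1) / t) (nhdsWithin 0 (Set.Ioi 0)) (nhds 1) :=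
    h.mono_left (nhdsWithin_mono 0 (fun t ht => ne_of_gt ht))
  have h3 := h2.inv₀ (one_ne_zero)
  simpa [inv_div] using h3

lemma part2 : (fun n : ℕ => (Real.pi ^ 2 / 6) * (fristedtX n / (1 - fristedtX n)))
    ~[atTop] (fun n : ℕ => (Real.pi / Real.sqrt 6) * Real.sqrt n) := by
  set c : ℝ := Real.pi / Real.sqrt 6 with hc
  have hc0 : 0 < c := div_pos Real.pi_pos (Real.sqrt_pos.mpr (by norm_num))
  have hc2 : c ^ 2 = Real.pi ^ 2 / 6 := by
    rw [hc, div_pow, Real.sq_sqrt (by norm_num : (6:ℝ) ≥ 0)]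
  rw [isEquivalent_iff_tendsto_one]
  · -- tendsto of ratio
    have ht : Tendsto (fun n : ℕ => c / Real.sqrt n) atTop (nhdsWithin 0 (Set.Ioi 0)) := by
      apply tendsto_nhdsWithin_of_tendsto_nhds_of_eventually_within
      · exact Tendsto.div_atTop tendsto_const_nhds sqrt_nat_atTop
      · filter_upwards [eventually_ge_atTop 1] with n hn
        have : (0:ℝ) < Real.sqrt n := Real.sqrt_pos.mpr (by exact_mod_cast Nat.pos_of_ne_zero (by omega))
        exact div_pos hc0 this
    have hcomp := slope_exp.comp ht
    apply hcomp.congr'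
    filter_upwards [eventually_ge_atTop 1] with n hn
    have hsn : (0:ℝ) < Real.sqrt n := Real.sqrt_pos.mpr (by exact_mod_cast Nat.pos_of_ne_zero (by omega))
    set t : ℝ := c / Real.sqrt n with hts
    have ht0 : 0 < t := div_pos hc0 hsn
    have hexp : fristedtX n = Real.exp (-t) := by rw [fristedtX, hts, neg_div]
    have he1 : Real.exp t - 1 ≠ 0 := by
      have : (1:ℝ) < Real.exp t := by
        rw [← Real.exp_zero]; exact Real.exp_lt_exp.mpr ht0
      linarith
    have he2 : (1:ℝ) - Real.exp (-t) ≠ 0 := by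
      have : Real.exp (-t) < 1 := Real.exp_lt_one_iff.mpr (by linarith)
      linarith
    show t / (Real.exp t - 1) = (Real.pi ^ 2 / 6) * (fristedtX n / (1 - fristedtX n)) / (c * Real.sqrt n)
    rw [hexp, ← hc2, Real.exp_neg]
    have he0 : Real.exp t ≠ 0 := (Real.exp_pos t).ne'
    have hne : (1:ℝ) - (Real.exp t)⁻¹ ≠ 0 := by rw [← Real.exp_neg]; exact he2
    have hsc : c = t * Real.sqrt n := by rw [hts, div_mul_cancel₀ _ hsn.ne']
    rw [hsc]
    field_simp
  · filter_upwards [eventually_ge_atTop 1] with n hn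
    have hsn : (0:ℝ) < Real.sqrt n := Real.sqrt_pos.mpr (by exact_mod_cast Nat.pos_of_ne_zero (by omega))
    positivity

lemma double_eq {x : ℝ} (hx : x ∈ Set.Ioo (0:ℝ) 1) :
    ∑' (i : ℕ) (j : ℕ), x ^ ((i + 1) * (j + 1)) / ((j : ℝ) + 1)
      = ∑' (j : ℕ), x ^ (j + 1) / (((j : ℝ) + 1) * (1 - x ^ (j + 1))) := by
  obtain ⟨hx0, hx1⟩ := hx
  set F : ℕ → ℕ → ℝ := fun i j => x ^ ((i + 1) * (j + 1)) / ((j : ℝ) + 1) with hF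
  have hsumF : Summable (Function.uncurry F) := by
    have hg : Summable (fun p : ℕ × ℕ => x ^ p.1 * x ^ p.2) :=
      (summable_geometric_of_lt_one hx0.le hx1).mul_of_nonneg
        (summable_geometric_of_lt_one hx0.le hx1)
        (fun i => pow_nonneg hx0.le i) (fun j => pow_nonneg hx0.le j)
    refine Summable.of_nonneg_of_le (fun p => by simp only [Function.uncurry, hF]; positivity) (fun p => ?_) hg
    calc Function.uncurry F p ≤ x ^ ((p.1 + 1) * (p.2 + 1)) := by
          rw [Function.uncurry, hF]
          refine div_le_self (by positivity) (by push_cast; linarith [Nat.cast_nonneg (α := ℝ) p.2])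
      _ ≤ x ^ (p.1 + p.2) := pow_le_pow_of_le_one hx0.le hx1.le (by nlinarith [p.1.zero_le, p.2.zero_le])
      _ = x ^ p.1 * x ^ p.2 := pow_add x p.1 p.2
  have hswap : ∑' (i : ℕ) (j : ℕ), F i j = ∑' (j : ℕ) (i : ℕ), F i j :=
    (Summable.tsum_comm' hsumF hsumF.prod_factor hsumF.prod_symm.prod_factor).symm
  rw [hswap]
  congr 1
  funext j
  have hy : x ^ (j + 1) < 1 := pow_lt_one₀ hx0.le hx1 (Nat.succ_ne_zero j)
  have hy0 : 0 < x ^ (j + 1) := pow_pos hx0 _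
  have h1y : (0:ℝ) < 1 - x ^ (j + 1) := by linarith
  have hgeo : HasSum (fun i : ℕ => (x ^ (j+1)) ^ i) (1 - x ^ (j+1))⁻¹ :=
    hasSum_geometric_of_lt_one hy0.le hy
  have h2 : HasSum (fun i : ℕ => F i j) (x ^ (j+1) * (1 - x ^ (j+1))⁻¹ / ((j:ℝ)+1)) := by
    have h3 := (hgeo.mul_left (x ^ (j+1))).div_const ((j:ℝ)+1)
    refine h3.congr_fun fun i => ?_
    rw [hF]
    simp only []
    rw [← pow_succ' (x ^ (j+1)) i, ← pow_mul, Nat.mul_comm]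
  rw [h2.tsum_eq]
  rw [div_eq_div_iff (by positivity) (by positivity)]
  field_simp


/-- **Total rate of the Poisson-process proposal is `O(√n)`.**
For every `x ∈ (0,1)`, `Σ_{j≥1} x^j/(j(1−x^j)) ≤ (π²/6)·x/(1−x)`; with
`c = π/√6` and `x = x(n) = exp(−c/√n)` the right-hand side is asymptotic to
`c·√n`; hence `s(n) = Σ_{i,j≥1} x(n)^{ij}/j` is `O(√n)`. -/
theorem poisson_proposal_rate_bound :
    (∀ x ∈ Set.Ioo (0 : ℝ) 1,
      ∑' j : ℕ, x ^ (j + 1) / (((j : ℝ) + 1) * (1 - x ^ (j + 1)))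
        ≤ (Real.pi ^ 2 / 6) * (x / (1 - x))) ∧
    ((fun n : ℕ => (Real.pi ^ 2 / 6) * (fristedtX n / (1 - fristedtX n)))
      ~[atTop] (fun n : ℕ => (Real.pi / Real.sqrt 6) * Real.sqrt n)) ∧
    ((fun n : ℕ => ∑' (i : ℕ) (j : ℕ), fristedtX n ^ ((i + 1) * (j + 1)) / ((j : ℝ) + 1))
      =O[atTop] (fun n : ℕ => Real.sqrt n)) := by
  refine ⟨fun x hx => part1 hx, part2, ?_⟩
  have hO1 : (fun n : ℕ => (Real.pi ^ 2 / 6) * (fristedtX n / (1 - fristedtX n)))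
      =O[atTop] (fun n : ℕ => Real.sqrt n) :=
    part2.isBigO.trans ((isBigO_refl (fun n : ℕ => Real.sqrt n) atTop).const_mul_left _)
  refine IsBigO.trans ?_ hO1
  rw [isBigO_iff]
  refine ⟨1, ?_⟩
  filter_upwards [eventually_ge_atTop 1] with n hn
  have hsn : (0:ℝ) < Real.sqrt n := Real.sqrt_pos.mpr (by exact_mod_cast Nat.pos_of_ne_zero (by omega))
  have hxmem : fristedtX n ∈ Set.Ioo (0:ℝ) 1 := by
    constructor
    · exact Real.exp_pos _
    · rw [fristedtX]
      apply Real.exp_lt_one_iff.mpr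
      have hc0 : (0:ℝ) < Real.pi / Real.sqrt 6 :=
        div_pos Real.pi_pos (Real.sqrt_pos.mpr (by norm_num))
      rw [neg_div]
      exact neg_neg_iff_pos.mpr (div_pos hc0 hsn)
  have heq := double_eq hxmem
  have hle := part1 hxmem
  have hnn : 0 ≤ ∑' (i : ℕ) (j : ℕ), fristedtX n ^ ((i + 1) * (j + 1)) / ((j : ℝ) + 1) := by
    refine tsum_nonneg fun i => tsum_nonneg fun j => ?_
    have := hxmem.1
    positivity
  have hfn : 0 ≤ (Real.pi ^ 2 / 6) * (fristedtX n / (1 - fristedtX n)) := by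
    have h1 : (0:ℝ) < 1 - fristedtX n := by linarith [hxmem.2]
    have h2 := hxmem.1
    positivity
  rw [Real.norm_eq_abs, Real.norm_eq_abs, abs_of_nonneg hnn, abs_of_nonneg hfn, one_mul]
  rw [heq]
  exact hle
end

section
/- Let c = π/√6 and for n ≥ 1 set x = x(n) = exp(−c/√n). Then Σ_{i,j≥1} (x^{ij}/j)·ln(j·x^{−ij}) ≤ (c − ζ'(2)/c)·√n, where ζ' is the derivative of the Riemann zeta function. -/
open Real

private lemma aux_exp_div_le {r : ℝ} (hr : 0 < r) :
    Real.exp (-r) / (1 - Real.exp (-r)) ≤ 1 / r := by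
  have h1 : Real.exp (-r) < 1 := by rw [Real.exp_lt_one_iff]; linarith
  have h2 : (0:ℝ) < 1 - Real.exp (-r) := by linarith
  rw [div_le_div_iff₀ h2 hr]
  have h4 : Real.exp (-r) * Real.exp r = 1 := by rw [← Real.exp_add]; simp
  nlinarith [Real.exp_pos (-r),
    mul_le_mul_of_nonneg_left (Real.add_one_le_exp r) (Real.exp_pos (-r)).le]

private lemma aux_exp_div_sq_le {r : ℝ} (hr : 0 < r) :
    Real.exp (-r) / (1 - Real.exp (-r)) ^ 2 ≤ 1 / r ^ 2 := by
  have h1 : Real.exp (-r) < 1 := by rw [Real.exp_lt_one_iff]; linarith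
  have h2 : (0:ℝ) < 1 - Real.exp (-r) := by linarith
  have hs : r / 2 < Real.sinh (r / 2) := Real.self_lt_sinh_iff.mpr (by linarith)
  rw [Real.sinh_eq] at hs
  have epos : (0:ℝ) < Real.exp (-(r/2)) := Real.exp_pos _
  have e1 : Real.exp (-(r/2)) * Real.exp (r/2) = 1 := by rw [← Real.exp_add]; simp
  have e2 : Real.exp (-(r/2)) * Real.exp (-(r/2)) = Real.exp (-r) := by
    rw [← Real.exp_add]; ring_nf
  have key : r * Real.exp (-(r/2)) ≤ 1 - Real.exp (-r) := by
    nlinarith [mul_lt_mul_of_pos_left hs epos]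
  rw [div_le_div_iff₀ (by positivity) (by positivity)]
  nlinarith [mul_le_mul key key (by positivity) h2.le]

private lemma habs2 : LSeries.abscissaOfAbsConv 1 < (2:ℂ).re := by
  rw [LSeries.abscissaOfAbsConv_one]
  have : (2:ℂ).re = (2:ℝ) := by simp
  rw [this]
  exact_mod_cast (by norm_num : (1:ℝ) < 2)

private lemma hderiv2 : deriv riemannZeta 2 = - LSeries (LSeries.logMul 1) 2 := by
  have heq : deriv riemannZeta 2 = deriv (LSeries 1) 2 := by
    apply Filter.EventuallyEq.deriv_eq
    have hopen : IsOpen {s : ℂ | 1 < s.re} := isOpen_lt continuous_const Complex.continuous_re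
    filter_upwards [hopen.mem_nhds (by norm_num : (2:ℂ) ∈ {s : ℂ | 1 < s.re})] with s hs
    exact (LSeries_one_eq_riemannZeta hs).symm
  rw [heq, LSeries_deriv habs2]

private lemma hasSum_log_div_sq :
    HasSum (fun j : ℕ => Real.log ((j:ℝ) + 1) / ((j : ℝ) + 1) ^ 2)
      (-(deriv riemannZeta 2).re) := by
  have hsum : LSeriesSummable (LSeries.logMul 1) 2 := LSeriesSummable_logMul_of_lt_re habs2
  have hHS : HasSum (fun n => LSeries.term (LSeries.logMul 1) 2 n)
      (LSeries (LSeries.logMul 1) 2) := hsum.hasSum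
  have hre := hHS.mapL Complex.reCLM
  have hre' : HasSum (fun n : ℕ => (LSeries.term (LSeries.logMul 1) 2 n).re)
      ((LSeries (LSeries.logMul 1) 2).re) := hre
  have hterm : ∀ j : ℕ, (LSeries.term (LSeries.logMul 1) 2 (j+1)).re
      = Real.log ((j:ℝ)+1) / ((j:ℝ)+1)^2 := by
    intro j
    rw [LSeries.term_of_ne_zero (by omega)]
    have hc : ((j+1 : ℕ) : ℂ) = (((j:ℝ)+1 : ℝ) : ℂ) := by push_cast; ring
    have hlog : Complex.log ((j+1 : ℕ) : ℂ) = ((Real.log ((j:ℝ)+1) : ℝ) : ℂ) := by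
      rw [hc, Complex.ofReal_log (by positivity)]
    have hpow : ((j+1:ℕ) : ℂ) ^ (2:ℂ) = ((((j:ℝ)+1)^2 : ℝ) : ℂ) := by
      rw [show (2:ℂ) = ((2:ℕ):ℂ) by norm_num, Complex.cpow_natCast, hc]
      push_cast; ring
    simp only [LSeries.logMul, Pi.one_apply, mul_one, hlog, hpow]
    rw [← Complex.ofReal_div]
    exact Complex.ofReal_re _
  have hshift := (hasSum_nat_add_iff (f := fun n : ℕ => (LSeries.term (LSeries.logMul 1) 2 n).re) 1).mpr
    (by simpa [LSeries.term] using hre')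
  rw [hderiv2]
  simp only [Complex.neg_re, neg_neg]
  rw [show (fun j : ℕ => Real.log ((j:ℝ)+1) / ((j:ℝ)+1)^2) = fun j : ℕ => (LSeries.term (LSeries.logMul 1) 2 (j+1)).re from funext fun j => (hterm j).symm]
  exact hshift

private lemma hasSum_basel : HasSum (fun j : ℕ => 1 / ((j:ℝ)+1)^2) (π^2/6) := by
  have h := hasSum_zeta_two
  have := (hasSum_nat_add_iff (f := fun n : ℕ => (1:ℝ) / (n:ℝ)^2) 1).mpr (by simpa using h)
  exact_mod_cast this

/-- **Knuth–Yao entropy bound for the Poisson-process proposal.**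
With `c = π/√6` and `x = x(n) = exp(−c/√n)`, the entropy-like quantity
`h(n) = Σ_{i,j≥1} (x^{ij}/j)·ln(j·x^{−ij})` satisfies
`h(n) ≤ (c − ζ'(2)/c)·√n`, where `ζ'` is the derivative of the Riemann zeta
function. -/
theorem knuth_yao_entropy_bound (n : ℕ) (hn : 1 ≤ n) :
    ∑' (i : ℕ) (j : ℕ),
        (fristedtX n ^ ((i + 1) * (j + 1)) / ((j : ℝ) + 1)) *
          Real.log (((j : ℝ) + 1) * (fristedtX n ^ ((i + 1) * (j + 1)))⁻¹)
      ≤ ((Real.pi / Real.sqrt 6) - (deriv riemannZeta 2).re / (Real.pi / Real.sqrt 6)) *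
          Real.sqrt n := by
  have arith1 : ∀ (a b u : ℝ), b ≠ 0 → u ≠ 0 → a / b * (1 / (b * u)) = a / b ^ 2 * u⁻¹ := by
    intro a b u hb hu; field_simp
  have arith2 : ∀ (b u : ℝ), b ≠ 0 → u ≠ 0 → u * (1 / (b * u) ^ 2) = 1 / b ^ 2 * u⁻¹ := by
    intro b u hb hu; field_simp
  have hnpos : (0:ℝ) < (n:ℝ) := by exact_mod_cast hn
  have hs0 : (0:ℝ) < Real.sqrt n := Real.sqrt_pos.mpr hnpos
  set c : ℝ := Real.pi / Real.sqrt 6 with hc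
  have hcpos : 0 < c := div_pos Real.pi_pos (Real.sqrt_pos.mpr (by norm_num))
  set s : ℝ := Real.sqrt n with hsdef
  set t : ℝ := c / s with ht
  have htpos : 0 < t := div_pos hcpos hs0
  have hx : fristedtX n = Real.exp (-t) := by
    rw [fristedtX, ht, neg_div]
  -- the nice form of the summand
  set F : ℕ → ℕ → ℝ := fun i j =>
    Real.exp (-((((i:ℝ)+1) * ((j:ℝ)+1)) * t)) *
      (Real.log ((j:ℝ)+1) / ((j:ℝ)+1) + ((i:ℝ)+1) * t) with hF
  have hterm_eq : ∀ i j : ℕ,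
      (fristedtX n ^ ((i + 1) * (j + 1)) / ((j : ℝ) + 1)) *
          Real.log (((j : ℝ) + 1) * (fristedtX n ^ ((i + 1) * (j + 1)))⁻¹) = F i j := by
    intro i j
    have hj1 : (0:ℝ) < (j:ℝ)+1 := by positivity
    have hpow : fristedtX n ^ ((i + 1) * (j + 1))
        = Real.exp (-((((i:ℝ)+1) * ((j:ℝ)+1)) * t)) := by
      rw [hx, ← Real.exp_nat_mul]
      congr 1; push_cast; ring
    rw [hpow, Real.log_mul (ne_of_gt hj1) (by positivity),
      Real.log_inv, Real.log_exp, hF]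
    field_simp
  -- geometric data for each column j
  set y : ℕ → ℝ := fun j => Real.exp (-(((j:ℝ)+1) * t)) with hy
  have hy0 : ∀ j, 0 < y j := fun j => Real.exp_pos _
  have hy1 : ∀ j, y j < 1 := by
    intro j
    rw [hy]
    rw [Real.exp_lt_one_iff]
    have : (0:ℝ) < ((j:ℝ)+1) * t := by positivity
    linarith
  set A : ℕ → ℝ := fun j => Real.log ((j:ℝ)+1) / ((j:ℝ)+1) with hA
  have hA0 : ∀ j, 0 ≤ A j := by
    intro j
    apply div_nonneg _ (by positivity)
    apply Real.log_nonneg; push_cast; linarith [Nat.cast_nonneg (α := ℝ) j]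
  set L : ℕ → ℝ := fun j => A j * (y j / (1 - y j)) + t * (y j / (1 - y j)^2) with hL
  have hFy : ∀ i j, F i j = A j * (y j ^ (i+1)) + t * (((i:ℝ)+1) * y j ^ (i+1)) := by
    intro i j
    rw [hF, hy, hA, ← Real.exp_nat_mul]
    have : ((i+1 : ℕ) : ℝ) * (-(((j:ℝ)+1) * t)) = -((((i:ℝ)+1) * ((j:ℝ)+1)) * t) := by
      push_cast; ring
    rw [this]; ring
  have hgeo : ∀ j, HasSum (fun i : ℕ => y j ^ (i+1)) (y j / (1 - y j)) := by
    intro j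
    have h := (hasSum_geometric_of_lt_one (hy0 j).le (hy1 j)).mul_left (y j)
    rw [div_eq_mul_inv]
    rw [show (fun i : ℕ => y j ^ (i+1)) = fun i : ℕ => y j * y j ^ i from funext fun i => by rw [pow_succ]; ring]
    exact h
  have hgeo2 : ∀ j, HasSum (fun i : ℕ => ((i:ℝ)+1) * y j ^ (i+1)) (y j / (1 - y j)^2) := by
    intro j
    have hnorm : ‖y j‖ < 1 := by rw [Real.norm_eq_abs, abs_of_pos (hy0 j)]; exact hy1 j
    have h0 := hasSum_coe_mul_geometric_of_norm_lt_one hnorm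
    have h1 := (hasSum_nat_add_iff
      (f := fun m : ℕ => (m:ℝ) * y j ^ m) 1).mpr (by simpa using h0)
    exact_mod_cast h1
  have hHSi : ∀ j, HasSum (fun i : ℕ => F i j) (L j) := by
    intro j
    have := ((hgeo j).mul_left (A j)).add (((hgeo2 j).mul_left t))
    rw [hL]
    rw [show (fun i : ℕ => F i j) = fun i : ℕ => A j * y j ^ (i+1) + t * (((i:ℝ)+1) * y j ^ (i+1)) from funext fun i => hFy i j]
    exact this
  have hL0 : ∀ j, 0 ≤ L j := fun j => (hHSi j).nonneg (by
    intro i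
    rw [hFy]
    have := hy0 j
    have := hA0 j
    positivity)
  -- upper bound h j for L j
  set B : ℕ → ℝ := fun j => Real.log ((j:ℝ)+1) / ((j:ℝ)+1)^2 * t⁻¹ + 1 / ((j:ℝ)+1)^2 * t⁻¹
    with hB
  have hLle : ∀ j, L j ≤ B j := by
    intro j
    have hj1 : (0:ℝ) < (j:ℝ)+1 := by positivity
    have hr : 0 < ((j:ℝ)+1) * t := by positivity
    have b1 := aux_exp_div_le hr
    have b2 := aux_exp_div_sq_le hr
    have hyr : y j = Real.exp (-(((j:ℝ)+1) * t)) := rfl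
    rw [← hyr] at b1 b2
    have e1 : A j * (y j / (1 - y j))
        ≤ Real.log ((j:ℝ)+1) / ((j:ℝ)+1)^2 * t⁻¹ := by
      have := mul_le_mul_of_nonneg_left b1 (hA0 j)
      refine this.trans_eq ?_
      simp only [hA]
      exact arith1 _ _ _ (by positivity) htpos.ne'
    have e2 : t * (y j / (1 - y j)^2)
        ≤ 1 / ((j:ℝ)+1)^2 * t⁻¹ := by
      have := mul_le_mul_of_nonneg_left b2 htpos.le
      refine this.trans_eq ?_
      exact arith2 _ _ (by positivity) htpos.ne'
    exact add_le_add e1 e2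
  have hHSB : HasSum B ((-(deriv riemannZeta 2).re) * t⁻¹ + (π^2/6) * t⁻¹) :=
    (hasSum_log_div_sq.mul_right t⁻¹).add (hasSum_basel.mul_right t⁻¹)
  have hLsum : Summable L :=
    Summable.of_nonneg_of_le hL0 hLle hHSB.summable
  -- summability on the product (j first)
  have hF0 : ∀ p : ℕ × ℕ, 0 ≤ F p.2 p.1 := by
    intro p
    rw [hFy]
    have := hy0 p.1
    have := hA0 p.1
    positivity
  have hGsum : Summable (fun p : ℕ × ℕ => F p.2 p.1) := by
    rw [summable_prod_of_nonneg hF0]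
    constructor
    · intro j; exact (hHSi j).summable
    · apply Summable.congr hLsum
      intro j
      exact ((hHSi j).tsum_eq).symm
  have hFsum : Summable (Function.uncurry F) := by
    have := hGsum.prod_symm
    apply this.congr
    intro p
    rfl
  -- main computation
  calc ∑' (i : ℕ) (j : ℕ),
        (fristedtX n ^ ((i + 1) * (j + 1)) / ((j : ℝ) + 1)) *
          Real.log (((j : ℝ) + 1) * (fristedtX n ^ ((i + 1) * (j + 1)))⁻¹)
      = ∑' (i : ℕ) (j : ℕ), F i j := by
        apply tsum_congr; intro i; apply tsum_congr; intro j; exact hterm_eq i j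
    _ = ∑' (j : ℕ) (i : ℕ), F i j := (Summable.tsum_comm hFsum).symm
    _ = ∑' (j : ℕ), L j := tsum_congr fun j => (hHSi j).tsum_eq
    _ ≤ (-(deriv riemannZeta 2).re) * t⁻¹ + (π^2/6) * t⁻¹ := by
        rw [← hHSB.tsum_eq]
        exact Summable.tsum_le_tsum hLle hLsum hHSB.summable
    _ = (c - (deriv riemannZeta 2).re / c) * s := by
        have hc2 : c^2 = π^2/6 := by
          rw [hc, div_pow, Real.sq_sqrt (by norm_num : (0:ℝ) ≤ 6)]
        have htinv : t⁻¹ = s / c := by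
          rw [ht]; field_simp
        rw [htinv, ← hc2]
        field_simp
        ring
end

section
/- As λ → ∞ through positive reals, the largest point probability of the Poisson distribution with mean λ satisfies sup_{k∈ℕ} e^{−λ}·λ^k/k! ∼ 1/√(2πλ); that is, √(2πλ) · sup_{k∈ℕ} e^{−λ}λ^k/k! → 1. -/
open Filter Real Topology
private lemma aux_up (g : ℕ → ℝ) : ∀ n : ℕ, (∀ k < n, g k ≤ g (k + 1)) → ∀ k ≤ n, g k ≤ g n := by
  intro n
  induction n with
  | zero => intro _ k hk; simp [Nat.le_zero.mp hk]
  | succ m ih =>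
    intro h k hk
    rcases eq_or_lt_of_le hk with h1 | h1
    · exact h1 ▸ le_refl _
    · have hk' : k ≤ m := Nat.lt_succ_iff.mp h1
      exact (ih (fun j hj => h j (hj.trans (Nat.lt_succ_self m))) k hk').trans
        (h m (Nat.lt_succ_self m))

private lemma aux_down (g : ℕ → ℝ) (n : ℕ) (h : ∀ k, n ≤ k → g (k + 1) ≤ g k) :
    ∀ k, n ≤ k → g k ≤ g n := by
  intro k hk
  induction k, hk using Nat.le_induction with
  | base => exact le_refl _
  | succ m hm ih => exact (h m hm).trans ih

private lemma poisson_step (lam : ℝ) (k : ℕ) :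
    Real.exp (-lam) * lam ^ (k + 1) / ((k + 1).factorial : ℝ)
      = (Real.exp (-lam) * lam ^ k / (k.factorial : ℝ)) * (lam / ((k : ℝ) + 1)) := by
  have h1 : (k.factorial : ℝ) ≠ 0 := Nat.cast_ne_zero.mpr k.factorial_ne_zero
  have h2 : ((k : ℝ) + 1) ≠ 0 := by positivity
  rw [Nat.factorial_succ]
  push_cast
  field_simp
  ring

private lemma f_le_floor (lam : ℝ) (hl : 1 ≤ lam) (k : ℕ) :
    Real.exp (-lam) * lam ^ k / (k.factorial : ℝ)
      ≤ Real.exp (-lam) * lam ^ ⌊lam⌋₊ / ((⌊lam⌋₊).factorial : ℝ) := by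
  set n := ⌊lam⌋₊ with hn
  set g : ℕ → ℝ := fun k => Real.exp (-lam) * lam ^ k / (k.factorial : ℝ) with hg
  have hg0 : ∀ j, 0 ≤ g j := fun j => by
    have : (0:ℝ) < j.factorial := by exact_mod_cast j.factorial_pos
    have hlam0 : (0:ℝ) ≤ lam := le_trans zero_le_one hl
    positivity
  have hlam0 : (0:ℝ) ≤ lam := le_trans zero_le_one hl
  show g k ≤ g n
  rcases le_or_gt k n with h | h
  · refine aux_up g n (fun j hj => ?_) k h
    have hj1 : (j : ℝ) + 1 ≤ lam := by
      have h2 : ((j + 1 : ℕ) : ℝ) ≤ (n : ℝ) := by exact_mod_cast hj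
      have h3 : (n : ℝ) ≤ lam := Nat.floor_le hlam0
      push_cast at h2
      linarith
    have hr : (1 : ℝ) ≤ lam / ((j : ℝ) + 1) := (one_le_div (by positivity)).mpr hj1
    calc g j = g j * 1 := (mul_one _).symm
      _ ≤ g j * (lam / ((j : ℝ) + 1)) := mul_le_mul_of_nonneg_left hr (hg0 j)
      _ = g (j + 1) := (poisson_step lam j).symm
  · refine aux_down g n (fun j hj => ?_) k h.le
    have hj1 : lam ≤ (j : ℝ) + 1 := by
      have h2 : lam < n + 1 := Nat.lt_floor_add_one lam
      have h3 : (n : ℝ) ≤ (j : ℝ) := by exact_mod_cast hj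
      linarith
    have hr : lam / ((j : ℝ) + 1) ≤ 1 := (div_le_one (by positivity)).mpr hj1
    calc g (j + 1) = g j * (lam / ((j : ℝ) + 1)) := poisson_step lam j
      _ ≤ g j * 1 := mul_le_mul_of_nonneg_left hr (hg0 j)
      _ = g j := mul_one _

private lemma sup_eq_floor (lam : ℝ) (hl : 1 ≤ lam) :
    (⨆ k : ℕ, Real.exp (-lam) * lam ^ k / (k.factorial : ℝ))
      = Real.exp (-lam) * lam ^ ⌊lam⌋₊ / ((⌊lam⌋₊).factorial : ℝ) := by
  apply le_antisymm
  · exact ciSup_le (f_le_floor lam hl)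
  · exact le_ciSup ⟨_, Set.forall_mem_range.mpr (f_le_floor lam hl)⟩ ⌊lam⌋₊
-- ratio lam / floor lam → 1
private lemma tendsto_div_floor : Tendsto (fun lam : ℝ => lam / (⌊lam⌋₊ : ℝ)) atTop (𝓝 1) := by
  have hupper : Tendsto (fun lam : ℝ => 1 + (lam - 1)⁻¹) atTop (𝓝 1) := by
    have h1 : Tendsto (fun lam : ℝ => lam - 1) atTop atTop := by
      simpa [sub_eq_add_neg] using tendsto_atTop_add_const_right atTop (-1 : ℝ) tendsto_id
    have h2 : Tendsto (fun lam : ℝ => (lam - 1)⁻¹) atTop (𝓝 0) :=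
      tendsto_inv_atTop_zero.comp h1
    simpa using (tendsto_const_nhds : Tendsto (fun _ : ℝ => (1:ℝ)) atTop (𝓝 1)).add h2
  apply tendsto_of_tendsto_of_tendsto_of_le_of_le' tendsto_const_nhds hupper
  · filter_upwards [eventually_ge_atTop (2:ℝ)] with lam hl
    have hn : 1 ≤ ⌊lam⌋₊ := Nat.le_floor (by exact_mod_cast (by linarith : (1:ℝ) ≤ lam))
    have hnp : (0:ℝ) < (⌊lam⌋₊ : ℝ) := by exact_mod_cast hn
    exact (one_le_div hnp).mpr (Nat.floor_le (by linarith))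
  · filter_upwards [eventually_ge_atTop (2:ℝ)] with lam hl
    have hn : 1 ≤ ⌊lam⌋₊ := Nat.le_floor (by exact_mod_cast (by linarith : (1:ℝ) ≤ lam))
    have hnp : (0:ℝ) < (⌊lam⌋₊ : ℝ) := by exact_mod_cast hn
    have h1 : lam - 1 < (⌊lam⌋₊ : ℝ) := Nat.sub_one_lt_floor lam
    have h2 : (0:ℝ) < lam - 1 := by linarith
    have h3 : lam / (⌊lam⌋₊ : ℝ) ≤ lam / (lam - 1) :=
      div_le_div_of_nonneg_left (by linarith) h2 h1.le
    have h4 : lam / (lam - 1) = 1 + (lam - 1)⁻¹ := by field_simp; ring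
    rw [h4] at h3
    exact h3

private lemma tendsto_sqrt_div_floor :
    Tendsto (fun lam : ℝ => Real.sqrt (lam / (⌊lam⌋₊ : ℝ))) atTop (𝓝 1) := by
  have := (Real.continuous_sqrt.tendsto 1).comp tendsto_div_floor
  simpa only [Function.comp_def, Real.sqrt_one] using this

private lemma tendsto_stirling_factor :
    Tendsto (fun lam : ℝ => Real.sqrt π / Stirling.stirlingSeq ⌊lam⌋₊) atTop (𝓝 1) := by
  have h := Stirling.tendsto_stirlingSeq_sqrt_pi.comp tendsto_nat_floor_atTop (α := ℝ)
  have h2 := (tendsto_const_nhds : Tendsto (fun _ : ℝ => Real.sqrt π) atTop (𝓝 (Real.sqrt π))).div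
    h (by positivity : Real.sqrt π ≠ 0)
  simpa [div_self (by positivity : Real.sqrt π ≠ 0), Pi.div_def, Function.comp_def] using h2

private lemma tendsto_exp_factor :
    Tendsto (fun lam : ℝ =>
        Real.exp ((⌊lam⌋₊ : ℝ) - lam) * (lam / (⌊lam⌋₊ : ℝ)) ^ ⌊lam⌋₊) atTop (𝓝 1) := by
  have hlower : Tendsto (fun lam : ℝ => Real.exp (-lam⁻¹)) atTop (𝓝 1) := by
    have h0 : Tendsto (fun x : ℝ => -x⁻¹) atTop (𝓝 0) := by
      simpa using (tendsto_inv_atTop_zero : Tendsto (fun x : ℝ => x⁻¹) atTop (𝓝 0)).neg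
    simpa [Function.comp_def] using (Real.continuous_exp.tendsto 0).comp h0
  apply tendsto_of_tendsto_of_tendsto_of_le_of_le' hlower tendsto_const_nhds
  · filter_upwards [eventually_ge_atTop (2:ℝ)] with lam hl
    have hn : 1 ≤ ⌊lam⌋₊ := Nat.le_floor (by exact_mod_cast (by linarith : (1:ℝ) ≤ lam))
    set n := ⌊lam⌋₊ with hdefn
    have hnp : (0:ℝ) < (n : ℝ) := by exact_mod_cast hn
    have hnl : (n : ℝ) ≤ lam := Nat.floor_le (by linarith)
    have hln : lam < (n : ℝ) + 1 := Nat.lt_floor_add_one lam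
    have hlp : (0:ℝ) < lam := by linarith
    have hq : (0:ℝ) < lam / n := by positivity
    have hpow : (lam / (n : ℝ)) ^ n = Real.exp ((n : ℝ) * Real.log (lam / n)) := by
      rw [Real.exp_nat_mul, Real.exp_log hq]
    rw [hpow, ← Real.exp_add, Real.exp_le_exp]
    have hlog : 1 - (lam / (n:ℝ))⁻¹ ≤ Real.log (lam / n) :=
      Real.one_sub_inv_le_log_of_pos hq
    have hinv : (lam / (n:ℝ))⁻¹ = (n:ℝ) / lam := by
      rw [inv_div]
    rw [hinv] at hlog
    have hmul : (n:ℝ) * (1 - (n:ℝ)/lam) ≤ (n:ℝ) * Real.log (lam / n) :=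
      mul_le_mul_of_nonneg_left hlog hnp.le
    have hsq : (lam - (n:ℝ))^2 ≤ 1 := by nlinarith
    have hident : (n:ℝ) - lam + (n:ℝ) * (1 - (n:ℝ)/lam) + lam⁻¹
        = (1 - (lam - (n:ℝ))^2) / lam := by
      field_simp
      ring
    have hpos : (0:ℝ) ≤ (1 - (lam - (n:ℝ))^2) / lam :=
      div_nonneg (by linarith) hlp.le
    linarith
  · filter_upwards [eventually_ge_atTop (2:ℝ)] with lam hl
    have hn : 1 ≤ ⌊lam⌋₊ := Nat.le_floor (by exact_mod_cast (by linarith : (1:ℝ) ≤ lam))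
    set n := ⌊lam⌋₊ with hdefn
    have hnp : (0:ℝ) < (n : ℝ) := by exact_mod_cast hn
    have hnl : (n : ℝ) ≤ lam := Nat.floor_le (by linarith)
    have hlp : (0:ℝ) < lam := by linarith
    have hq : (0:ℝ) < lam / n := by positivity
    have hpow : (lam / (n : ℝ)) ^ n = Real.exp ((n : ℝ) * Real.log (lam / n)) := by
      rw [Real.exp_nat_mul, Real.exp_log hq]
    rw [hpow, ← Real.exp_add, Real.exp_le_one_iff]
    have hlog : Real.log (lam / n) ≤ lam / n - 1 := Real.log_le_sub_one_of_pos hq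
    have hmul : (n:ℝ) * Real.log (lam / n) ≤ (n:ℝ) * (lam / n - 1) :=
      mul_le_mul_of_nonneg_left hlog hnp.le
    have : (n:ℝ) * (lam / n - 1) = lam - n := by field_simp
    linarith
private lemma poisson_identity (lam : ℝ) (hl : 1 ≤ lam) :
    Real.sqrt (2 * π * lam) * (Real.exp (-lam) * lam ^ ⌊lam⌋₊ / ((⌊lam⌋₊).factorial : ℝ))
      = (Real.sqrt π / Stirling.stirlingSeq ⌊lam⌋₊)
        * Real.sqrt (lam / (⌊lam⌋₊ : ℝ))
        * (Real.exp ((⌊lam⌋₊ : ℝ) - lam) * (lam / (⌊lam⌋₊ : ℝ)) ^ ⌊lam⌋₊) := by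
  have hlp : (0:ℝ) < lam := lt_of_lt_of_le one_pos hl
  set n := ⌊lam⌋₊ with hdefn
  have hn : 1 ≤ n := Nat.le_floor (by exact_mod_cast hl)
  have hnp : (0:ℝ) < (n : ℝ) := by exact_mod_cast hn
  have hs : 0 < Stirling.stirlingSeq n := by
    obtain ⟨m, hm⟩ := Nat.exists_eq_add_of_le hn
    rw [hm, add_comm]
    exact Stirling.stirlingSeq'_pos m
  have hfact : ((n).factorial : ℝ)
      = Stirling.stirlingSeq n * (Real.sqrt (2 * n) * ((n:ℝ) / Real.exp 1) ^ n) := by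
    rw [Stirling.stirlingSeq]
    rw [div_mul_cancel₀]
    positivity
  have hsqrt : Real.sqrt (2 * π * lam)
      = Real.sqrt π * Real.sqrt (lam / (n:ℝ)) * Real.sqrt (2 * (n:ℝ)) := by
    rw [← Real.sqrt_mul (by positivity), ← Real.sqrt_mul (by positivity)]
    congr 1
    field_simp
  have hE1 : Real.exp ((n:ℝ) - lam) = Real.exp n / Real.exp lam := Real.exp_sub _ _
  have hE2 : Real.exp (-lam) = (Real.exp lam)⁻¹ := Real.exp_neg lam
  have hP1 : (lam / (n:ℝ)) ^ n = lam ^ n / (n:ℝ) ^ n := div_pow _ _ _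
  have hP2 : ((n:ℝ) / Real.exp 1) ^ n = (n:ℝ) ^ n / Real.exp n := by
    rw [div_pow, Real.exp_one_pow]
  rw [hfact, hsqrt, hE1, hE2, hP1, hP2]
  have h1 : Real.exp lam ≠ 0 := (Real.exp_pos _).ne'
  have h2 : Real.exp (n:ℝ) ≠ 0 := (Real.exp_pos _).ne'
  have h3 : ((n:ℝ)) ^ n ≠ 0 := by positivity
  have h4 : Stirling.stirlingSeq n ≠ 0 := hs.ne'
  have h5 : Real.sqrt (2 * (n:ℝ)) ≠ 0 := by positivity
  field_simp

/-- **Asymptotics of the largest Poisson point probability.**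
As `λ → ∞`, `sup_{k∈ℕ} e^{−λ}·λ^k/k! ∼ 1/√(2πλ)`; that is,
`√(2πλ) · sup_k e^{−λ}λ^k/k! → 1`. -/
theorem poisson_max_prob_asymptotics :
    Tendsto
      (fun lam : ℝ =>
        Real.sqrt (2 * Real.pi * lam) *
          ⨆ k : ℕ, Real.exp (-lam) * lam ^ k / (k.factorial : ℝ))
      atTop (nhds 1) := by
  have hABC : Tendsto
      (fun lam : ℝ =>
        (Real.sqrt π / Stirling.stirlingSeq ⌊lam⌋₊)
          * Real.sqrt (lam / (⌊lam⌋₊ : ℝ))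
          * (Real.exp ((⌊lam⌋₊ : ℝ) - lam) * (lam / (⌊lam⌋₊ : ℝ)) ^ ⌊lam⌋₊))
      atTop (𝓝 1) := by
    have := (tendsto_stirling_factor.mul tendsto_sqrt_div_floor).mul tendsto_exp_factor
    simpa using this
  have hF : Tendsto
      (fun lam : ℝ =>
        Real.sqrt (2 * Real.pi * lam) *
          (Real.exp (-lam) * lam ^ ⌊lam⌋₊ / ((⌊lam⌋₊).factorial : ℝ)))
      atTop (𝓝 1) := by
    apply hABC.congr'
    filter_upwards [eventually_ge_atTop (1:ℝ)] with lam hl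
    exact (poisson_identity lam hl).symm
  apply hF.congr'
  filter_upwards [eventually_ge_atTop (1:ℝ)] with lam hl
  rw [sup_eq_floor lam hl]
end
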